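/- Let f(x) = ∑_{n ≥ 0} x^{2^n − 1} ∈ ℤ[[x]], which has constant term 1 and hence is invertible, and define δf(x,y) = f(x+y)/(f(x)·f(y)) ∈ ℤ[[x,y]]. Then δf(x,y) · δf(−x,−y) ≡ δf(x,y)² modulo 4ℤ[[x,y]]. -/

import Mathlib

/-- `f(x+y) = ∑_{n ≥ 0} (x+y)^(2^n - 1)` in `ℤ[[x,y]]`: the coefficient of `x^i y^j` is
`C(i+j, i)` if `i + j + 1` is a power of `2`, and `0` otherwise. -/
noncomputable def fXY : MvPowerSeries (Fin 2) ℤ := by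
  classical
  exact fun d =>
    if ∃ n : ℕ, d 0 + d 1 + 1 = 2 ^ n then ((d 0 + d 1).choose (d 0) : ℤ) else 0

/-- `f(-x-y) = ∑_{n ≥ 0} (-(x+y))^(2^n - 1)` in `ℤ[[x,y]]`. -/
noncomputable def fmXY : MvPowerSeries (Fin 2) ℤ := by
  classical
  exact fun d =>
    if ∃ n : ℕ, d 0 + d 1 + 1 = 2 ^ n
    then (-1 : ℤ) ^ (d 0 + d 1) * ((d 0 + d 1).choose (d 0) : ℤ) else 0

/-- `f(x) = ∑_{n ≥ 0} x^(2^n - 1)` in `ℤ[[x,y]]`. -/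
noncomputable def fX : MvPowerSeries (Fin 2) ℤ := by
  classical
  exact fun d => if d 1 = 0 ∧ ∃ n : ℕ, d 0 + 1 = 2 ^ n then 1 else 0

/-- `f(-x)` in `ℤ[[x,y]]`. -/
noncomputable def fmX : MvPowerSeries (Fin 2) ℤ := by
  classical
  exact fun d => if d 1 = 0 ∧ ∃ n : ℕ, d 0 + 1 = 2 ^ n then (-1 : ℤ) ^ (d 0) else 0

/-- `f(y) = ∑_{n ≥ 0} y^(2^n - 1)` in `ℤ[[x,y]]`. -/
noncomputable def fY : MvPowerSeries (Fin 2) ℤ := by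
  classical
  exact fun d => if d 0 = 0 ∧ ∃ n : ℕ, d 1 + 1 = 2 ^ n then 1 else 0

/-- `f(-y)` in `ℤ[[x,y]]`. -/
noncomputable def fmY : MvPowerSeries (Fin 2) ℤ := by
  classical
  exact fun d => if d 0 = 0 ∧ ∃ n : ℕ, d 1 + 1 = 2 ^ n then (-1 : ℤ) ^ (d 1) else 0

open MvPowerSeries Finset

abbrev S4 := MvPowerSeries (Fin 2) (ZMod 4)
abbrev S2 := MvPowerSeries (Fin 2) (ZMod 2)

/-- build a finsupp on Fin 2 -/
noncomputable def fs (i j : ℕ) : Fin 2 →₀ ℕ := Finsupp.single 0 i + Finsupp.single 1 j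

@[simp] lemma fs_apply0 (i j : ℕ) : fs i j 0 = i := by
  simp [fs, Finsupp.single_apply]

@[simp] lemma fs_apply1 (i j : ℕ) : fs i j 1 = j := by
  simp [fs, Finsupp.single_apply]

lemma fs_eq (d : Fin 2 →₀ ℕ) : d = fs (d 0) (d 1) := by
  ext a
  fin_cases a <;> simp

lemma fs_inj {i j k l : ℕ} : fs i j = fs k l ↔ i = k ∧ j = l := by
  constructor
  · intro h
    constructor
    · have := congrArg (fun f => f 0) h; simpa using this
    · have := congrArg (fun f => f 1) h; simpa using this
  · rintro ⟨rfl, rfl⟩; rfl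

lemma fs_add (i j k l : ℕ) : fs i j + fs k l = fs (i+k) (j+l) := by
  ext a; fin_cases a <;> simp

lemma fs_le {i j k l : ℕ} : fs i j ≤ fs k l ↔ i ≤ k ∧ j ≤ l := by
  rw [Finsupp.le_def]
  constructor
  · intro h; exact ⟨by simpa using h 0, by simpa using h 1⟩
  · intro h a; fin_cases a
    · simpa using h.1
    · simpa using h.2

lemma fs_sub (i j k l : ℕ) : fs i j - fs k l = fs (i-k) (j-l) := by
  ext a; fin_cases a <;> simp [Finsupp.tsub_apply]

lemma single0 : Finsupp.single (0 : Fin 2) 1 = fs 1 0 := by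
  ext a; fin_cases a <;> simp [Finsupp.single_apply]

lemma single1 : Finsupp.single (1 : Fin 2) 1 = fs 0 1 := by
  ext a; fin_cases a <;> simp [Finsupp.single_apply]

lemma fs_eq_zero {i j : ℕ} : fs i j = 0 ↔ i = 0 ∧ j = 0 := by
  constructor
  · intro h
    exact ⟨by simpa using congrArg (fun f => f 0) h, by simpa using congrArg (fun f => f 1) h⟩
  · rintro ⟨rfl, rfl⟩; ext a; fin_cases a <;> simp

-- coefficient of X s * φ
lemma coeff_X_mul' {R : Type*} [CommRing R] (s : Fin 2) (φ : MvPowerSeries (Fin 2) R)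
    (d : Fin 2 →₀ ℕ) :
    MvPowerSeries.coeff d (X s * φ) =
      if Finsupp.single s 1 ≤ d then MvPowerSeries.coeff (d - Finsupp.single s 1) φ else 0 := by
  rw [X, coeff_monomial_mul]
  simp

def rr : ZMod 4 →+* ZMod 2 := ZMod.castHom (show 2 ∣ 4 by norm_num) (ZMod 2)

lemma zmod2_mul_self (a : ZMod 2) : a * a = a := by revert a; decide

lemma zmod2_add_self (a : ZMod 2) : a + a = 0 := by revert a; decide

lemma two_mul_eq_zero4 (a : ZMod 4) (h : rr a = 0) : 2 * a = 0 := by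
  rw [rr, ZMod.castHom_apply] at h
  revert h; revert a; decide

lemma two_mul_eq_zero (ψ : S4) (h : MvPowerSeries.map rr ψ = 0) : 2 * ψ = 0 := by
  have h2 : (2 : S4) = C 2 := (map_ofNat (C (σ := Fin 2) (R := ZMod 4)) 2).symm
  ext d
  rw [h2, coeff_C_mul, map_zero]
  apply two_mul_eq_zero4
  rw [← coeff_map, h, map_zero]

lemma coeff_mul_self (φ : S2) (d : Fin 2 →₀ ℕ) :
    MvPowerSeries.coeff d (φ * φ) =
      if 2 ∣ d 0 ∧ 2 ∣ d 1 then MvPowerSeries.coeff (fs (d 0 / 2) (d 1 / 2)) φ else 0 := by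
  classical
  rw [MvPowerSeries.coeff_mul]
  rw [← Finset.sum_filter_add_sum_filter_not _ (fun p => p.1 = p.2)]
  have hzero : (∑ p ∈ (HasAntidiagonal.antidiagonal d).filter (fun p => ¬ p.1 = p.2),
      MvPowerSeries.coeff p.1 φ * MvPowerSeries.coeff p.2 φ) = 0 := by
    apply Finset.sum_involution (fun p _ => (p.2, p.1))
    · intro p hp
      simp only []
      rw [mul_comm]
      exact zmod2_add_self _
    · intro p hp hf
      simp only [Finset.mem_filter] at hp
      intro hq
      exact hp.2 (congrArg Prod.snd hq)
    · intro p hp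
      simp only [Finset.mem_filter, Finset.HasAntidiagonal.mem_antidiagonal] at hp ⊢
      exact ⟨by rw [add_comm]; exact hp.1, fun hq => hp.2 hq.symm⟩
    · intro p hp; rfl
  rw [hzero, add_zero]
  have hfil : (HasAntidiagonal.antidiagonal d).filter (fun p => p.1 = p.2) =
      if 2 ∣ d 0 ∧ 2 ∣ d 1 then {(fs (d 0 / 2) (d 1 / 2), fs (d 0 / 2) (d 1 / 2))} else ∅ := by
    ext p
    simp only [Finset.mem_filter, Finset.HasAntidiagonal.mem_antidiagonal]
    split_ifs with hdvd
    · simp only [Finset.mem_singleton]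
      constructor
      · rintro ⟨hsum, heq⟩
        have h0 : p.1 0 + p.2 0 = d 0 := by
          rw [← hsum]; simp [Finsupp.add_apply]
        have h1 : p.1 1 + p.2 1 = d 1 := by
          rw [← hsum]; simp [Finsupp.add_apply]
        rw [← heq] at h0 h1
        have e1 : p.1 = fs (d 0 / 2) (d 1 / 2) := by
          rw [fs_eq p.1]
          rw [fs_inj]
          omega
        rw [Prod.ext_iff]
        exact ⟨e1, heq ▸ e1⟩
      · rintro rfl
        refine ⟨?_, rfl⟩
        rw [fs_add]
        conv_rhs => rw [fs_eq d]
        rw [fs_inj]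
        omega
    · simp only [Finset.notMem_empty, iff_false]
      rintro ⟨hsum, heq⟩
      have h0 : p.1 0 + p.2 0 = d 0 := by rw [← hsum]; simp [Finsupp.add_apply]
      have h1 : p.1 1 + p.2 1 = d 1 := by rw [← hsum]; simp [Finsupp.add_apply]
      rw [← heq] at h0 h1
      exact hdvd ⟨⟨p.1 0, by omega⟩, ⟨p.1 1, by omega⟩⟩
  rw [hfil]
  split_ifs with hdvd
  · rw [Finset.sum_singleton, zmod2_mul_self]
  · simp

-- number theory lemmas
lemma choose_pow_sub_one_odd (n : ℕ) : ∀ i, i ≤ 2^n - 1 → (2^n - 1).choose i % 2 = 1 := by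
  intro i
  induction i with
  | zero => intro _; simp
  | succ i ih =>
    intro h
    have h1 : 1 ≤ 2^n := Nat.one_le_two_pow
    have hi : i ≤ 2^n - 1 := by omega
    have hih := ih hi
    have hp : (2^n).choose (i+1) = (2^n - 1).choose i + (2^n - 1).choose (i+1) := by
      have : 2^n = (2^n - 1) + 1 := by omega
      rw [this, Nat.choose_succ_succ]
      simp
    have hd : 2 ∣ (2^n).choose (i+1) :=
      Nat.Prime.dvd_choose_pow Nat.prime_two (by omega) (by omega)
    omega

lemma odd_cast2 (a : ℕ) (h : a % 2 = 1) : (a : ZMod 2) = 1 := by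
  rw [← Nat.mod_add_div a 2, h]
  push_cast
  have h2 : (2 : ZMod 2) = 0 := rfl
  rw [h2]
  ring

lemma even_cast2 (a : ℕ) (h : 2 ∣ a) : (a : ZMod 2) = 0 := by
  exact (ZMod.natCast_eq_zero_iff a 2).2 h

lemma cast_choose_pow_sub_one (n i : ℕ) (h : i ≤ 2^n - 1) :
    (((2^n - 1).choose i : ℕ) : ZMod 2) = 1 :=
  odd_cast2 _ (choose_pow_sub_one_odd n i h)

lemma cast_choose_pow (n i : ℕ) (h0 : i ≠ 0) (h1 : i ≠ 2^n) :
    (((2^n).choose i : ℕ) : ZMod 2) = 0 :=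
  even_cast2 _ (Nat.Prime.dvd_choose_pow Nat.prime_two h0 h1)

lemma pow2_double (t : ℕ) : (∃ n, 2*t+2 = 2^n) ↔ (∃ m, t+1 = 2^m) := by
  constructor
  · rintro ⟨n, hn⟩
    cases n with
    | zero => omega
    | succ m =>
      refine ⟨m, ?_⟩
      rw [pow_succ] at hn
      omega
  · rintro ⟨m, hm⟩
    refine ⟨m+1, ?_⟩
    rw [pow_succ]
    omega

lemma odd_not_pow2 (a : ℕ) (h : a % 2 = 1) (h2 : 2 ≤ a) : ¬ ∃ n, a = 2^n := by
  rintro ⟨n, rfl⟩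
  cases n with
  | zero => omega
  | succ m =>
    rw [pow_succ] at h
    omega


open scoped Classical in
lemma coeff_fX (d : Fin 2 →₀ ℕ) :
    MvPowerSeries.coeff d fX = if d 1 = 0 ∧ ∃ n : ℕ, d 0 + 1 = 2 ^ n then 1 else 0 := rfl

open scoped Classical in
lemma coeff_fY (d : Fin 2 →₀ ℕ) :
    MvPowerSeries.coeff d fY = if d 0 = 0 ∧ ∃ n : ℕ, d 1 + 1 = 2 ^ n then 1 else 0 := rfl

open scoped Classical in
lemma coeff_fXY (d : Fin 2 →₀ ℕ) :
    MvPowerSeries.coeff d fXY =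
      if ∃ n : ℕ, d 0 + d 1 + 1 = 2 ^ n then ((d 0 + d 1).choose (d 0) : ℤ) else 0 := rfl

open scoped Classical in
lemma coeff_fmX (d : Fin 2 →₀ ℕ) :
    MvPowerSeries.coeff d fmX =
      if d 1 = 0 ∧ ∃ n : ℕ, d 0 + 1 = 2 ^ n then (-1 : ℤ) ^ (d 0) else 0 := rfl

open scoped Classical in
lemma coeff_fmY (d : Fin 2 →₀ ℕ) :
    MvPowerSeries.coeff d fmY =
      if d 0 = 0 ∧ ∃ n : ℕ, d 1 + 1 = 2 ^ n then (-1 : ℤ) ^ (d 1) else 0 := rfl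

open scoped Classical in
lemma coeff_fmXY (d : Fin 2 →₀ ℕ) :
    MvPowerSeries.coeff d fmXY =
      if ∃ n : ℕ, d 0 + d 1 + 1 = 2 ^ n
      then (-1 : ℤ) ^ (d 0 + d 1) * ((d 0 + d 1).choose (d 0) : ℤ) else 0 := rfl

lemma eq_zero_iff (d : Fin 2 →₀ ℕ) : d = 0 ↔ d 0 = 0 ∧ d 1 = 0 := by
  constructor
  · intro h; simp [h]
  · rintro ⟨h0, h1⟩
    rw [fs_eq d, h0, h1]
    exact fs_eq_zero.mpr ⟨rfl, rfl⟩

lemma odd_of_pow2 {a n : ℕ} (h : a + 1 = 2 ^ n) (ha : a ≠ 0) : a % 2 = 1 := by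
  cases n with
  | zero => omega
  | succ m => rw [pow_succ] at h; omega

lemma neg_one_pow_odd {a : ℕ} (h : a % 2 = 1) : (-1 : ℤ) ^ a = -1 :=
  Odd.neg_one_pow (Nat.odd_iff.2 h)

lemma two_C : (2 : MvPowerSeries (Fin 2) ℤ) = C 2 := (map_ofNat _ 2).symm

lemma fmX_eq : fmX = 2 - fX := by
  ext d
  rw [map_sub, coeff_fmX, coeff_fX, two_C, coeff_C]
  by_cases hc : d 1 = 0 ∧ ∃ n : ℕ, d 0 + 1 = 2 ^ n
  · rw [if_pos hc, if_pos hc]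
    by_cases hd : d = 0
    · rw [if_pos hd, (eq_zero_iff d).1 hd |>.1]
      norm_num
    · rw [if_neg hd]
      have h0 : d 0 ≠ 0 := fun h => hd ((eq_zero_iff d).2 ⟨h, hc.1⟩)
      obtain ⟨n, hn⟩ := hc.2
      rw [neg_one_pow_odd (odd_of_pow2 hn h0)]
      ring
  · rw [if_neg hc, if_neg hc]
    have hd : d ≠ 0 := by
      intro h
      obtain ⟨h0, h1⟩ := (eq_zero_iff d).1 h
      exact hc ⟨h1, ⟨0, by omega⟩⟩
    rw [if_neg hd]
    ring

lemma fmY_eq : fmY = 2 - fY := by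
  ext d
  rw [map_sub, coeff_fmY, coeff_fY, two_C, coeff_C]
  by_cases hc : d 0 = 0 ∧ ∃ n : ℕ, d 1 + 1 = 2 ^ n
  · rw [if_pos hc, if_pos hc]
    by_cases hd : d = 0
    · rw [if_pos hd, (eq_zero_iff d).1 hd |>.2]
      norm_num
    · rw [if_neg hd]
      have h1 : d 1 ≠ 0 := fun h => hd ((eq_zero_iff d).2 ⟨hc.1, h⟩)
      obtain ⟨n, hn⟩ := hc.2
      rw [neg_one_pow_odd (odd_of_pow2 hn h1)]
      ring
  · rw [if_neg hc, if_neg hc]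
    have hd : d ≠ 0 := by
      intro h
      obtain ⟨h0, h1⟩ := (eq_zero_iff d).1 h
      exact hc ⟨h0, ⟨0, by omega⟩⟩
    rw [if_neg hd]
    ring

lemma fmXY_eq : fmXY = 2 - fXY := by
  ext d
  rw [map_sub, coeff_fmXY, coeff_fXY, two_C, coeff_C]
  by_cases hc : ∃ n : ℕ, d 0 + d 1 + 1 = 2 ^ n
  · rw [if_pos hc, if_pos hc]
    by_cases hd : d = 0
    · obtain ⟨h0, h1⟩ := (eq_zero_iff d).1 hd
      rw [if_pos hd, h0, h1]
      norm_num
    · rw [if_neg hd]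
      have h0 : d 0 + d 1 ≠ 0 := by
        intro h
        exact hd ((eq_zero_iff d).2 ⟨by omega, by omega⟩)
      obtain ⟨n, hn⟩ := hc
      rw [neg_one_pow_odd (odd_of_pow2 hn h0)]
      ring
  · rw [if_neg hc, if_neg hc]
    have hd : d ≠ 0 := by
      intro h
      obtain ⟨h0, h1⟩ := (eq_zero_iff d).1 h
      exact hc ⟨0, by omega⟩
    rw [if_neg hd]
    ring

noncomputable def F2 : S2 := MvPowerSeries.map (Int.castRingHom (ZMod 2)) fX
noncomputable def G2 : S2 := MvPowerSeries.map (Int.castRingHom (ZMod 2)) fY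
noncomputable def H2 : S2 := MvPowerSeries.map (Int.castRingHom (ZMod 2)) fXY

open scoped Classical in
lemma coeff_F2 (d : Fin 2 →₀ ℕ) :
    MvPowerSeries.coeff d F2 = if d 1 = 0 ∧ ∃ n : ℕ, d 0 + 1 = 2 ^ n then 1 else 0 := by
  rw [F2, coeff_map, coeff_fX]
  split_ifs <;> simp

open scoped Classical in
lemma coeff_G2 (d : Fin 2 →₀ ℕ) :
    MvPowerSeries.coeff d G2 = if d 0 = 0 ∧ ∃ n : ℕ, d 1 + 1 = 2 ^ n then 1 else 0 := by
  rw [G2, coeff_map, coeff_fY]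
  split_ifs <;> simp

open scoped Classical in
lemma coeff_H2 (d : Fin 2 →₀ ℕ) :
    MvPowerSeries.coeff d H2 =
      if ∃ n : ℕ, d 0 + d 1 + 1 = 2 ^ n then (((d 0 + d 1).choose (d 0) : ℕ) : ZMod 2) else 0 := by
  rw [H2, coeff_map, coeff_fXY]
  split_ifs <;> push_cast <;> simp

open scoped Classical in
lemma P1 : F2 + X 0 * (F2 * F2) = 1 := by
  ext d
  obtain ⟨i, j, rfl⟩ : ∃ i j, d = fs i j := ⟨d 0, d 1, fs_eq d⟩
  rw [map_add, coeff_X_mul', single0, fs_sub, coeff_mul_self, coeff_F2, coeff_F2,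
    MvPowerSeries.coeff_one]
  simp only [fs_le, fs_apply0, fs_apply1, fs_eq_zero, Nat.sub_zero]
  by_cases hj : j = 0
  · subst hj
    by_cases hi : i = 0
    · subst hi
      rw [if_pos ⟨rfl, ⟨0, rfl⟩⟩, if_neg (by omega : ¬((1:ℕ) ≤ 0 ∧ (0:ℕ) ≤ 0)),
        if_pos ⟨rfl, rfl⟩]
      norm_num
    · by_cases hpar : i % 2 = 1
      · have key : (∃ n, i + 1 = 2 ^ n) ↔ ∃ n, (i - 1) / 2 + 1 = 2 ^ n := by
          have h2 : 2 * ((i-1)/2) + 2 = i + 1 := by omega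
          have h3 := pow2_double ((i-1)/2)
          rw [h2] at h3
          exact h3
        by_cases hex : ∃ n, i + 1 = 2 ^ n
        · rw [if_pos ⟨rfl, hex⟩, if_pos (⟨by omega, by omega⟩ : 1 ≤ i ∧ (0:ℕ) ≤ 0),
            if_pos (⟨by omega, by omega⟩ : 2 ∣ i - 1 ∧ 2 ∣ 0),
            if_pos ⟨by omega, key.1 hex⟩, if_neg (by omega : ¬(i = 0 ∧ (0:ℕ) = 0))]
          decide
        · rw [if_neg (fun h => hex h.2), if_pos (⟨by omega, by omega⟩ : 1 ≤ i ∧ (0:ℕ) ≤ 0),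
            if_pos (⟨by omega, by omega⟩ : 2 ∣ i - 1 ∧ 2 ∣ 0),
            if_neg (fun h => hex (key.2 h.2)), if_neg (by omega : ¬(i = 0 ∧ (0:ℕ) = 0))]
          norm_num
      · rw [if_neg (fun h => odd_not_pow2 (i+1) (by omega) (by omega) h.2),
          if_pos (⟨by omega, by omega⟩ : 1 ≤ i ∧ (0:ℕ) ≤ 0),
          if_neg (by omega : ¬(2 ∣ i - 1 ∧ 2 ∣ 0)),
          if_neg (by omega : ¬(i = 0 ∧ (0:ℕ) = 0))]
        norm_num
  · rw [if_neg (fun h => hj h.1), if_neg (by omega : ¬(i = 0 ∧ j = 0))]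
    by_cases hle : 1 ≤ i ∧ 0 ≤ j
    · rw [if_pos hle]
      by_cases h2 : 2 ∣ i - 1 ∧ 2 ∣ j
      · rw [if_pos h2, if_neg (fun h => absurd h.1 (by omega : ¬ j/2 = 0))]
        norm_num
      · rw [if_neg h2]
        norm_num
    · rw [if_neg hle]
      norm_num

open scoped Classical in
lemma P2 : G2 + X 1 * (G2 * G2) = 1 := by
  ext d
  obtain ⟨i, j, rfl⟩ : ∃ i j, d = fs i j := ⟨d 0, d 1, fs_eq d⟩
  rw [map_add, coeff_X_mul', single1, fs_sub, coeff_mul_self, coeff_G2, coeff_G2,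
    MvPowerSeries.coeff_one]
  simp only [fs_le, fs_apply0, fs_apply1, fs_eq_zero, Nat.sub_zero]
  by_cases hi : i = 0
  · subst hi
    by_cases hj : j = 0
    · subst hj
      rw [if_pos ⟨rfl, ⟨0, rfl⟩⟩, if_neg (by omega : ¬((0:ℕ) ≤ 0 ∧ (1:ℕ) ≤ 0)),
        if_pos ⟨rfl, rfl⟩]
      norm_num
    · by_cases hpar : j % 2 = 1
      · have key : (∃ n, j + 1 = 2 ^ n) ↔ ∃ n, (j - 1) / 2 + 1 = 2 ^ n := by
          have h2 : 2 * ((j-1)/2) + 2 = j + 1 := by omega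
          have h3 := pow2_double ((j-1)/2)
          rw [h2] at h3
          exact h3
        by_cases hex : ∃ n, j + 1 = 2 ^ n
        · rw [if_pos ⟨rfl, hex⟩, if_pos (⟨by omega, by omega⟩ : (0:ℕ) ≤ 0 ∧ 1 ≤ j),
            if_pos (⟨by omega, by omega⟩ : 2 ∣ 0 ∧ 2 ∣ j - 1),
            if_pos ⟨by omega, key.1 hex⟩, if_neg (by omega : ¬((0:ℕ) = 0 ∧ j = 0))]
          decide
        · rw [if_neg (fun h => hex h.2), if_pos (⟨by omega, by omega⟩ : (0:ℕ) ≤ 0 ∧ 1 ≤ j),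
            if_pos (⟨by omega, by omega⟩ : 2 ∣ 0 ∧ 2 ∣ j - 1),
            if_neg (fun h => hex (key.2 h.2)), if_neg (by omega : ¬((0:ℕ) = 0 ∧ j = 0))]
          norm_num
      · rw [if_neg (fun h => odd_not_pow2 (j+1) (by omega) (by omega) h.2),
          if_pos (⟨by omega, by omega⟩ : (0:ℕ) ≤ 0 ∧ 1 ≤ j),
          if_neg (by omega : ¬(2 ∣ 0 ∧ 2 ∣ j - 1)),
          if_neg (by omega : ¬((0:ℕ) = 0 ∧ j = 0))]
        norm_num
  · rw [if_neg (fun h => hi h.1), if_neg (by omega : ¬(i = 0 ∧ j = 0))]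
    by_cases hle : 0 ≤ i ∧ 1 ≤ j
    · rw [if_pos hle]
      by_cases h2 : 2 ∣ i ∧ 2 ∣ j - 1
      · rw [if_pos h2, if_neg (fun h => absurd h.1 (by omega : ¬ i/2 = 0))]
        norm_num
      · rw [if_neg h2]
        norm_num
    · rw [if_neg hle]
      norm_num

open scoped Classical in
lemma P3 : H2 + (X 0 + X 1) * (H2 * H2) = 1 := by
  ext d
  obtain ⟨i, j, rfl⟩ : ∃ i j, d = fs i j := ⟨d 0, d 1, fs_eq d⟩
  rw [map_add, add_mul, map_add, coeff_X_mul', coeff_X_mul', single0, single1, fs_sub, fs_sub,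
    coeff_mul_self, coeff_mul_self, coeff_H2, coeff_H2, coeff_H2, MvPowerSeries.coeff_one]
  simp only [fs_le, fs_apply0, fs_apply1, fs_eq_zero, Nat.sub_zero]
  by_cases h00 : i = 0 ∧ j = 0
  · obtain ⟨rfl, rfl⟩ := h00
    rw [if_pos (⟨0, rfl⟩ : ∃ n : ℕ, 0 + 0 + 1 = 2 ^ n),
      if_neg (by omega : ¬((1:ℕ) ≤ 0 ∧ (0:ℕ) ≤ 0)),
      if_neg (by omega : ¬((0:ℕ) ≤ 0 ∧ (1:ℕ) ≤ 0)), if_pos ⟨rfl, rfl⟩]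
    norm_num
  · rw [if_neg h00]
    by_cases hpar : (i + j) % 2 = 0
    · rw [if_neg (odd_not_pow2 (i+j+1) (by omega) (by omega))]
      split_ifs <;> first | (exfalso; omega) | norm_num
    · -- i + j odd
      by_cases hio : i % 2 = 1
      · -- i odd, j even
        have e2 : (i - 1) / 2 + j / 2 = (i + j - 1) / 2 := by omega
        rw [e2]
        have third : (if (0:ℕ) ≤ i ∧ 1 ≤ j then
            if 2 ∣ i ∧ 2 ∣ j - 1 then
              (if ∃ n, i / 2 + (j - 1) / 2 + 1 = 2 ^ n
                then (((i / 2 + (j - 1) / 2).choose (i / 2) : ℕ) : ZMod 2) else 0)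
            else 0 else 0) = 0 := by
          by_cases hg2 : (0:ℕ) ≤ i ∧ 1 ≤ j
          · rw [if_pos hg2, if_neg (by omega : ¬(2 ∣ i ∧ 2 ∣ j - 1))]
          · rw [if_neg hg2]
        rw [third]
        by_cases hex : ∃ n, i + j + 1 = 2 ^ n
        · obtain ⟨n, hn⟩ := hex
          obtain ⟨m, hm⟩ : ∃ m, (i + j - 1) / 2 + 1 = 2 ^ m := by
            cases n with
            | zero => omega
            | succ m =>
              rw [pow_succ] at hn
              exact ⟨m, by omega⟩
          rw [if_pos ⟨n, hn⟩, if_pos (⟨by omega, by omega⟩ : 1 ≤ i ∧ 0 ≤ j),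
            if_pos (⟨by omega, by omega⟩ : 2 ∣ i - 1 ∧ 2 ∣ j), if_pos ⟨m, hm⟩,
            show (i + j - 1) / 2 = 2 ^ m - 1 by omega,
            cast_choose_pow_sub_one m ((i-1)/2) (by omega),
            show i + j = 2 ^ n - 1 by omega,
            cast_choose_pow_sub_one n i (by omega)]
          decide
        · have hQ : ¬ ∃ m, (i + j - 1) / 2 + 1 = 2 ^ m := by
            rintro ⟨m, hm⟩
            exact hex ⟨m + 1, by rw [pow_succ]; omega⟩
          rw [if_neg hex, if_pos (⟨by omega, by omega⟩ : 1 ≤ i ∧ 0 ≤ j),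
            if_pos (⟨by omega, by omega⟩ : 2 ∣ i - 1 ∧ 2 ∣ j), if_neg hQ]
          norm_num
      · -- j odd, i even
        have e2 : i / 2 + (j - 1) / 2 = (i + j - 1) / 2 := by omega
        rw [e2]
        have second : (if (1:ℕ) ≤ i ∧ 0 ≤ j then
            if 2 ∣ i - 1 ∧ 2 ∣ j then
              (if ∃ n, (i - 1) / 2 + j / 2 + 1 = 2 ^ n
                then ((((i - 1) / 2 + j / 2).choose ((i - 1) / 2) : ℕ) : ZMod 2) else 0)
            else 0 else 0) = 0 := by
          by_cases hg1 : (1:ℕ) ≤ i ∧ 0 ≤ j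
          · rw [if_pos hg1, if_neg (by omega : ¬(2 ∣ i - 1 ∧ 2 ∣ j))]
          · rw [if_neg hg1]
        rw [second]
        by_cases hex : ∃ n, i + j + 1 = 2 ^ n
        · obtain ⟨n, hn⟩ := hex
          obtain ⟨m, hm⟩ : ∃ m, (i + j - 1) / 2 + 1 = 2 ^ m := by
            cases n with
            | zero => omega
            | succ m =>
              rw [pow_succ] at hn
              exact ⟨m, by omega⟩
          rw [if_pos ⟨n, hn⟩, if_pos (⟨by omega, by omega⟩ : (0:ℕ) ≤ i ∧ 1 ≤ j),
            if_pos (⟨by omega, by omega⟩ : 2 ∣ i ∧ 2 ∣ j - 1), if_pos ⟨m, hm⟩,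
            show (i + j - 1) / 2 = 2 ^ m - 1 by omega,
            cast_choose_pow_sub_one m (i/2) (by omega),
            show i + j = 2 ^ n - 1 by omega,
            cast_choose_pow_sub_one n i (by omega)]
          decide
        · have hQ : ¬ ∃ m, (i + j - 1) / 2 + 1 = 2 ^ m := by
            rintro ⟨m, hm⟩
            exact hex ⟨m + 1, by rw [pow_succ]; omega⟩
          rw [if_neg hex, if_pos (⟨by omega, by omega⟩ : (0:ℕ) ≤ i ∧ 1 ≤ j),
            if_pos (⟨by omega, by omega⟩ : 2 ∣ i ∧ 2 ∣ j - 1), if_neg hQ]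
          norm_num

open scoped Classical in
lemma P4 : (X 0 + X 1) * H2 = X 0 * F2 + X 1 * G2 := by
  ext d
  obtain ⟨i, j, rfl⟩ : ∃ i j, d = fs i j := ⟨d 0, d 1, fs_eq d⟩
  rw [add_mul, map_add, map_add, coeff_X_mul', coeff_X_mul', coeff_X_mul', coeff_X_mul',
    single0, single1, fs_sub, fs_sub, coeff_H2, coeff_H2, coeff_F2, coeff_G2]
  simp only [fs_le, fs_apply0, fs_apply1, Nat.sub_zero]
  by_cases hi : 1 ≤ i
  · by_cases hj : 1 ≤ j
    · rw [if_pos (⟨by omega, by omega⟩ : 1 ≤ i ∧ 0 ≤ j),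
        if_pos (⟨by omega, by omega⟩ : (0:ℕ) ≤ i ∧ 1 ≤ j),
        if_pos (⟨by omega, by omega⟩ : 1 ≤ i ∧ 0 ≤ j),
        if_pos (⟨by omega, by omega⟩ : (0:ℕ) ≤ i ∧ 1 ≤ j),
        if_neg (fun h => by omega : ¬(j = 0 ∧ ∃ n, i - 1 + 1 = 2 ^ n)),
        if_neg (fun h => by omega : ¬(i = 0 ∧ ∃ n, j - 1 + 1 = 2 ^ n)),
        show i - 1 + j + 1 = i + j by omega, show i + (j - 1) + 1 = i + j by omega]
      by_cases hex : ∃ n, i + j = 2 ^ n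
      · obtain ⟨n, hn⟩ := hex
        rw [if_pos ⟨n, hn⟩, if_pos ⟨n, hn⟩,
          show i - 1 + j = 2 ^ n - 1 by omega, show i + (j - 1) = 2 ^ n - 1 by omega,
          cast_choose_pow_sub_one n (i - 1) (by omega),
          cast_choose_pow_sub_one n i (by omega)]
        decide
      · rw [if_neg hex, if_neg hex]
    · have hj0 : j = 0 := by omega
      subst hj0
      rw [if_pos (⟨by omega, by omega⟩ : 1 ≤ i ∧ (0:ℕ) ≤ 0),
        if_pos (⟨by omega, by omega⟩ : 1 ≤ i ∧ (0:ℕ) ≤ 0),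
        if_neg (by omega : ¬((0:ℕ) ≤ i ∧ (1:ℕ) ≤ 0)),
        if_neg (by omega : ¬((0:ℕ) ≤ i ∧ (1:ℕ) ≤ 0)),
        show i - 1 + 0 + 1 = i by omega, show i - 1 + 0 = i - 1 by omega,
        Nat.choose_self]
      by_cases hex : ∃ n, i = 2 ^ n
      · rw [if_pos hex, if_pos (⟨rfl, hex⟩ : (0:ℕ) = 0 ∧ ∃ n, i = 2 ^ n)]
        norm_num
      · rw [if_neg hex, if_neg (fun h => hex h.2 : ¬((0:ℕ) = 0 ∧ ∃ n, i = 2 ^ n))]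
  · by_cases hj : 1 ≤ j
    · have hi0 : i = 0 := by omega
      subst hi0
      rw [if_neg (by omega : ¬((1:ℕ) ≤ 0 ∧ 0 ≤ j)),
        if_neg (by omega : ¬((1:ℕ) ≤ 0 ∧ 0 ≤ j)),
        if_pos (⟨by omega, by omega⟩ : (0:ℕ) ≤ 0 ∧ 1 ≤ j),
        if_pos (⟨by omega, by omega⟩ : (0:ℕ) ≤ 0 ∧ 1 ≤ j),
        show 0 + (j - 1) + 1 = j by omega, show 0 + (j - 1) = j - 1 by omega,
        Nat.choose_zero_right, show j - 1 + 1 = j by omega]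
      by_cases hex : ∃ n, j = 2 ^ n
      · rw [if_pos hex, if_pos (⟨rfl, hex⟩ : (0:ℕ) = 0 ∧ ∃ n, j = 2 ^ n)]
        norm_num
      · rw [if_neg hex, if_neg (fun h => hex h.2 : ¬((0:ℕ) = 0 ∧ ∃ n, j = 2 ^ n))]
    · rw [if_neg (by omega : ¬(1 ≤ i ∧ 0 ≤ j)), if_neg (by omega : ¬((0:ℕ) ≤ i ∧ 1 ≤ j)),
        if_neg (by omega : ¬(1 ≤ i ∧ 0 ≤ j)), if_neg (by omega : ¬((0:ℕ) ≤ i ∧ 1 ≤ j))]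

noncomputable def F4 : S4 := MvPowerSeries.map (Int.castRingHom (ZMod 4)) fX
noncomputable def G4 : S4 := MvPowerSeries.map (Int.castRingHom (ZMod 4)) fY
noncomputable def H4 : S4 := MvPowerSeries.map (Int.castRingHom (ZMod 4)) fXY

lemma map_rr_comm (φ : MvPowerSeries (Fin 2) ℤ) :
    MvPowerSeries.map rr (MvPowerSeries.map (Int.castRingHom (ZMod 4)) φ) =
      MvPowerSeries.map (Int.castRingHom (ZMod 2)) φ := by
  ext d
  simp only [coeff_map]
  exact map_intCast rr _

lemma map_rr_F4 : MvPowerSeries.map rr F4 = F2 := map_rr_comm fX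
lemma map_rr_G4 : MvPowerSeries.map rr G4 = G2 := map_rr_comm fY
lemma map_rr_H4 : MvPowerSeries.map rr H4 = H2 := map_rr_comm fXY

lemma two_eq_zero_S2 : (2 : S2) = 0 := by
  have h : (2 : S2) = C 2 := (map_ofNat _ 2).symm
  rw [h, show (2 : ZMod 2) = 0 from rfl, map_zero]

lemma key4 (F Xv : S4) (h : MvPowerSeries.map rr (1 - F - Xv * (F * F)) = 0) :
    (2 - F) * (1 + 2 * (Xv * F)) = F := by
  have h2 := two_mul_eq_zero _ h
  have h4 : 2 * (2 * (Xv * F)) = 0 := by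
    apply two_mul_eq_zero
    rw [map_mul, map_ofNat, two_eq_zero_S2, zero_mul]
  linear_combination h2 + h4

lemma A4 : (2 - F4) * (1 + 2 * (X 0 * F4)) = F4 := by
  apply key4
  rw [map_sub, map_sub, map_one, map_mul, map_mul, MvPowerSeries.map_X, map_rr_F4, ← P1]
  ring

lemma B4 : (2 - G4) * (1 + 2 * (X 1 * G4)) = G4 := by
  apply key4
  rw [map_sub, map_sub, map_one, map_mul, map_mul, MvPowerSeries.map_X, map_rr_G4, ← P2]
  ring

lemma C4 : (2 - H4) * (1 + 2 * ((X 0 + X 1) * H4)) = H4 := by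
  apply key4
  rw [map_sub, map_sub, map_one, map_mul, map_mul, map_add, MvPowerSeries.map_X (s := 0), MvPowerSeries.map_X (s := 1), map_rr_H4, ← P3]
  ring

lemma D4 : (1 + 2 * (X 0 * F4)) * (1 + 2 * (X 1 * G4)) = 1 + 2 * ((X 0 + X 1) * H4) := by
  have h1 : 2 * (X 0 * F4 + X 1 * G4 - (X 0 + X 1) * H4) = 0 := by
    apply two_mul_eq_zero
    rw [map_sub, map_add, map_mul, map_mul, map_mul, map_add, MvPowerSeries.map_X (s := 0), MvPowerSeries.map_X (s := 1),
      map_rr_F4, map_rr_G4, map_rr_H4, ← P4]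
    ring
  have h2 : 2 * (2 * ((X 0 * F4) * (X 1 * G4))) = 0 := by
    apply two_mul_eq_zero
    rw [map_mul, map_ofNat, two_eq_zero_S2, zero_mul]
  linear_combination h1 + h2

lemma ccF4 : MvPowerSeries.constantCoeff F4 = 1 := by
  rw [F4, constantCoeff_map, ← coeff_zero_eq_constantCoeff_apply, coeff_fX,
    if_pos ⟨rfl, ⟨0, by norm_num⟩⟩]
  simp

lemma ccG4 : MvPowerSeries.constantCoeff G4 = 1 := by
  rw [G4, constantCoeff_map, ← coeff_zero_eq_constantCoeff_apply, coeff_fY,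
    if_pos ⟨rfl, ⟨0, by norm_num⟩⟩]
  simp

/-- With `f(x) = ∑ x^(2^n - 1)` (constant term `1`, hence invertible), set
`δf(x,y) = f(x+y)/(f(x)f(y)) ∈ ℤ[[x,y]]`.  Then `δf(x,y)·δf(-x,-y) ≡ δf(x,y)²` modulo
`4ℤ[[x,y]]`.  Here `D` (resp. `Dm`) denotes the power series `δf(x,y)` (resp. `δf(-x,-y)`),
characterized by `D·(f(x)f(y)) = f(x+y)` (resp. `Dm·(f(-x)f(-y)) = f(-x-y)`). -/
theorem statement10 (D Dm : MvPowerSeries (Fin 2) ℤ)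
    (hD : D * (fX * fY) = fXY)
    (hDm : Dm * (fmX * fmY) = fmXY)
    (d : Fin 2 →₀ ℕ) :
    (4 : ℤ) ∣ MvPowerSeries.coeff d (D * Dm - D ^ 2) := by
  have hu : MvPowerSeries.constantCoeff (F4 * G4) = ((1 : (ZMod 4)ˣ) : ZMod 4) := by
    rw [map_mul, ccF4, ccG4]
    simp
  have hinv := MvPowerSeries.mul_invOfUnit (F4 * G4) 1 hu
  set V := MvPowerSeries.invOfUnit (F4 * G4) 1 with hV
  set g := MvPowerSeries.map (Int.castRingHom (ZMod 4)) with hg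
  have hgD : g D * (F4 * G4) = H4 := by
    have h := congrArg (⇑g) hD
    rw [map_mul, map_mul] at h
    exact h
  have hgDm : g Dm * ((2 - F4) * (2 - G4)) = 2 - H4 := by
    rw [fmX_eq, fmY_eq, fmXY_eq] at hDm
    have h := congrArg (⇑g) hDm
    rw [map_mul, map_mul, map_sub, map_sub, map_sub, map_ofNat] at h
    exact h
  have heq : g Dm * (F4 * G4) = g D * (F4 * G4) := by
    calc g Dm * (F4 * G4)
        = g Dm * (((2 - F4) * (1 + 2*(X 0 * F4))) * ((2 - G4) * (1 + 2*(X 1 * G4)))) := by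
          rw [A4, B4]
      _ = (g Dm * ((2 - F4) * (2 - G4))) * ((1 + 2*(X 0 * F4)) * (1 + 2*(X 1 * G4))) := by
          ring
      _ = (2 - H4) * (1 + 2*((X 0 + X 1) * H4)) := by rw [hgDm, D4]
      _ = H4 := C4
      _ = g D * (F4 * G4) := hgD.symm
  have hDmD : g Dm = g D := by
    calc g Dm = g Dm * ((F4 * G4) * V) := by rw [hinv, mul_one]
      _ = (g Dm * (F4 * G4)) * V := by ring
      _ = (g D * (F4 * G4)) * V := by rw [heq]
      _ = g D * ((F4 * G4) * V) := by ring
      _ = g D := by rw [hinv, mul_one]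
  have hzero : g (D * Dm - D ^ 2) = 0 := by
    rw [map_sub, map_mul, map_pow, hDmD]
    ring
  have hc := congrArg (MvPowerSeries.coeff d) hzero
  rw [coeff_map, map_zero] at hc
  have h4 := (ZMod.intCast_zmod_eq_zero_iff_dvd _ 4).1 hc
  exact_mod_cast h4
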